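/- There is an absolute constant c > 0 such that the following holds. Let n ≥ 2, let V be a set of n vertices, let S ⊆ V be nonempty, let d : S → ℝ_{≥0} with d(v) ≤ n for all v ∈ S, let ε ∈ (0,1] and η > 0. Let (X_v)_{v∈S} be independent random variables each distributed as Geom(e^ε), set D(v) = d(v) + X_v, and set T = (1+η)·(1/|S|)·Σ_{u∈S} D(u). Then for every v ∈ S with d(v) > (1+η)·(1/|S|)·Σ_{u∈S} d(u) + c·((1+η)/ε)·log n, it holds that Pr[D(v) ≤ T] ≤ 1/n³. -/

import Mathlib

open scoped Classical
open MeasureTheory ProbabilityTheory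
open scoped ENNReal

/-- The symmetric geometric distribution `Geom(γ)` (as a measure on `ℝ` supported on the
integers): probability mass `((γ−1)/(γ+1))·γ^{−|k|}` at each integer `k`. -/
noncomputable def symGeom (γ : ℝ) : Measure ℝ :=
  Measure.sum fun k : ℤ =>
    (ENNReal.ofReal ((γ - 1) / (γ + 1) * γ ^ (-|k|))) • Measure.dirac (k : ℝ)

lemma symGeom_apply (γ : ℝ) {s : Set ℝ} (hs : MeasurableSet s) :
    symGeom γ s
      = ∑' k : ℤ, ENNReal.ofReal ((γ - 1) / (γ + 1) * γ ^ (-|k|)) * s.indicator 1 (k : ℝ) := by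
  rw [symGeom, Measure.sum_apply _ hs]
  congr 1; funext k
  rw [Measure.smul_apply, smul_eq_mul, Measure.dirac_apply' _ hs]

lemma onesided {γ : ℝ} (hγ : 1 < γ) {C : ℝ} (hC : 0 ≤ C) (a : ℤ) :
    ∑' k : ℤ, (if a ≤ k then ENNReal.ofReal (C * γ ^ (-k)) else 0)
      = ENNReal.ofReal (C * γ ^ (-a) * (γ / (γ - 1))) := by
  have hγ0 : 0 < γ := lt_trans one_pos hγ
  have hinj : Function.Injective (fun j : ℕ => a + (j : ℤ)) := fun x y h => by simpa using h
  have hsupp : Function.support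
      (fun k : ℤ => if a ≤ k then ENNReal.ofReal (C * γ ^ (-k)) else 0)
      ⊆ Set.range (fun j : ℕ => a + (j : ℤ)) := by
    intro k hk
    by_cases h : a ≤ k
    · exact ⟨(k - a).toNat, by simp [Int.toNat_of_nonneg (by omega : (0:ℤ) ≤ k - a)]⟩
    · simp [h] at hk
  rw [← hinj.tsum_eq hsupp]
  have hterm : ∀ j : ℕ, (if a ≤ a + (j:ℤ) then ENNReal.ofReal (C * γ ^ (-(a + (j:ℤ)))) else 0)
      = ENNReal.ofReal ((C * γ ^ (-a)) * (γ⁻¹) ^ j) := by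
    intro j
    rw [if_pos (by omega)]
    congr 1
    have h2 : γ ^ (-(a + (j:ℤ))) = γ ^ (-a) * γ⁻¹ ^ j := by
      rw [neg_add, zpow_add₀ (ne_of_gt hγ0), zpow_neg (γ) (j:ℤ), zpow_natCast, inv_pow]
    rw [h2, mul_assoc]
  simp only [hterm]
  rw [← ENNReal.ofReal_tsum_of_nonneg (fun j => by positivity)
    (((summable_geometric_of_lt_one (by positivity) (inv_lt_one_of_one_lt₀ hγ)).mul_left _))]
  congr 1
  rw [tsum_mul_left, tsum_geometric_of_lt_one (by positivity) (inv_lt_one_of_one_lt₀ hγ)]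
  have h1 : (1 - γ⁻¹)⁻¹ = γ / (γ - 1) := by
    field_simp
  rw [h1, mul_assoc]

lemma symGeom_tail {γ : ℝ} (hγ : 1 < γ) {t : ℝ} (ht : 1 ≤ t) :
    symGeom γ {x : ℝ | t ≤ |x|} ≤ ENNReal.ofReal (2 * γ ^ (1 - t)) := by
  have hγ0 : 0 < γ := lt_trans one_pos hγ
  have hC : 0 ≤ (γ - 1) / (γ + 1) := div_nonneg (by linarith) (by linarith)
  have hs : MeasurableSet {x : ℝ | t ≤ |x|} :=
    measurableSet_le measurable_const continuous_abs.measurable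
  set a : ℤ := ⌈t⌉ with hadef
  have hat : t ≤ (a : ℝ) := Int.le_ceil t
  have ha1 : (1 : ℤ) ≤ a := by
    have : (1:ℝ) ≤ (a:ℝ) := le_trans ht hat
    exact_mod_cast this
  set g1 : ℤ → ℝ≥0∞ := fun k => if a ≤ k then ENNReal.ofReal ((γ-1)/(γ+1) * γ ^ (-k)) else 0
    with hg1
  set g2 : ℤ → ℝ≥0∞ := fun k => if a ≤ -k then ENNReal.ofReal ((γ-1)/(γ+1) * γ ^ k) else 0
    with hg2
  have hb : ∀ k : ℤ,
      ENNReal.ofReal ((γ-1)/(γ+1) * γ ^ (-|k|)) * Set.indicator {x:ℝ | t ≤ |x|} 1 (k:ℝ)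
        ≤ g1 k + g2 k := by
    intro k
    by_cases hk : (k:ℝ) ∈ {x:ℝ | t ≤ |x|}
    · rw [Set.indicator_of_mem hk, Pi.one_apply, mul_one]
      have hkabs : t ≤ ((|k| : ℤ) : ℝ) := by
        rw [Int.cast_abs]; exact hk
      have hak : a ≤ |k| := Int.ceil_le.mpr hkabs
      rcases le_or_gt 0 k with h0 | h0
      · have : |k| = k := abs_of_nonneg h0
        rw [this] at hak
        calc ENNReal.ofReal ((γ-1)/(γ+1) * γ ^ (-|k|)) = g1 k := by
              rw [hg1]; simp only [if_pos hak, abs_of_nonneg h0]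
          _ ≤ g1 k + g2 k := le_self_add
      · have : |k| = -k := abs_of_neg h0
        rw [this] at hak
        calc ENNReal.ofReal ((γ-1)/(γ+1) * γ ^ (-|k|)) = g2 k := by
              rw [hg2]; simp only [if_pos hak, abs_of_neg h0, neg_neg]
          _ ≤ g1 k + g2 k := le_add_self
    · rw [Set.indicator_of_notMem hk, mul_zero]; exact zero_le
  have hsum2 : ∑' k : ℤ, g2 k = ∑' k : ℤ, g1 k := by
    rw [← (Equiv.neg ℤ).tsum_eq g2]
    congr 1; funext k
    simp only [hg1, hg2, Equiv.neg_apply, neg_neg]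
  have hone : ∑' k : ℤ, g1 k = ENNReal.ofReal ((γ-1)/(γ+1) * γ ^ (-a) * (γ / (γ - 1))) :=
    onesided hγ hC a
  have hx : (γ-1)/(γ+1) * γ ^ (-a) * (γ / (γ - 1)) ≤ γ ^ (1 - t) := by
    have hfrac : (γ-1)/(γ+1) * (γ/(γ-1)) = γ/(γ+1) := by
      rw [div_mul_div_comm, mul_comm (γ-1) γ,
        mul_div_mul_right _ _ (show γ-1 ≠ 0 by intro h; nlinarith)]
    have h1 : (γ-1)/(γ+1) * γ ^ (-a) * (γ / (γ - 1)) = γ ^ (-a) * (γ/(γ+1)) := by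
      rw [← hfrac]; ring
    have h2 : γ/(γ+1) ≤ 1 := by
      rw [div_le_one (by linarith)]; linarith
    have h3 : (γ : ℝ) ^ (-a) ≤ γ ^ (1 - t) := by
      have : (γ : ℝ) ^ (-a) = γ ^ (((-a : ℤ)):ℝ) := by
        rw [Real.rpow_intCast]
      rw [this]
      apply Real.rpow_le_rpow_of_exponent_le (le_of_lt hγ)
      push_cast; linarith
    calc (γ-1)/(γ+1) * γ ^ (-a) * (γ / (γ - 1)) = γ ^ (-a) * (γ/(γ+1)) := h1
      _ ≤ γ ^ (-a) * 1 := by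
          apply mul_le_mul_of_nonneg_left h2 (le_of_lt (zpow_pos hγ0 _))
      _ = γ ^ (-a) := mul_one _
      _ ≤ γ ^ (1 - t) := h3
  calc symGeom γ {x : ℝ | t ≤ |x|}
      = ∑' k : ℤ, ENNReal.ofReal ((γ-1)/(γ+1) * γ ^ (-|k|))
          * Set.indicator {x:ℝ | t ≤ |x|} 1 (k:ℝ) := symGeom_apply γ hs
    _ ≤ ∑' k : ℤ, (g1 k + g2 k) := ENNReal.tsum_le_tsum hb
    _ = (∑' k : ℤ, g1 k) + ∑' k : ℤ, g2 k := ENNReal.tsum_add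
    _ = ENNReal.ofReal ((γ-1)/(γ+1) * γ ^ (-a) * (γ / (γ - 1)))
          + ENNReal.ofReal ((γ-1)/(γ+1) * γ ^ (-a) * (γ / (γ - 1))) := by
        rw [hsum2, hone]
    _ = ENNReal.ofReal ((γ-1)/(γ+1) * γ ^ (-a) * (γ / (γ - 1))
          + (γ-1)/(γ+1) * γ ^ (-a) * (γ / (γ - 1))) := by
        have hxnn : 0 ≤ (γ-1)/(γ+1) * γ ^ (-a) * (γ / (γ - 1)) :=
          mul_nonneg (mul_nonneg hC (le_of_lt (zpow_pos hγ0 _)))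
            (div_nonneg (by linarith) (by linarith))
        rw [ENNReal.ofReal_add hxnn hxnn]
    _ ≤ ENNReal.ofReal (2 * γ ^ (1 - t)) := by
        apply ENNReal.ofReal_le_ofReal; linarith

lemma symGeom_tail_exp {ε t : ℝ} (hε : 0 < ε) (ht : 1 ≤ t) :
    symGeom (Real.exp ε) {x : ℝ | t ≤ |x|}
      ≤ ENNReal.ofReal (2 * Real.exp (ε * (1 - t))) := by
  have h1 : (1:ℝ) < Real.exp ε := by
    calc (1:ℝ) = Real.exp 0 := (Real.exp_zero).symm
      _ < Real.exp ε := Real.exp_lt_exp.mpr hε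
  have h := symGeom_tail h1 ht
  rwa [Real.rpow_def_of_pos (Real.exp_pos ε), Real.log_exp] at h

/-- **High-degree vertices survive a noisy threshold step.** There is an absolute
constant `c > 0` such that: for every `n ≥ 2`, vertex set `V = Fin n`, nonempty
`S ⊆ V`, degrees `d : S → [0, n]`, `ε ∈ (0,1]` and `η > 0`, if the `X_v` (`v ∈ S`) are
independent `Geom(e^ε)` noises, `D(v) = d(v) + X_v`, and
`T = (1+η)·(1/|S|)·Σ_{u∈S} D(u)`, then every `v ∈ S` with
`d(v) > (1+η)·(1/|S|)·Σ_{u∈S} d(u) + c·((1+η)/ε)·log n` satisfies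
`Pr[D(v) ≤ T] ≤ 1/n³`. -/
theorem noisy_threshold_survival :
    ∃ c : ℝ, 0 < c ∧
    ∀ {Ω : Type} [MeasurableSpace Ω] (μpr : Measure Ω) [IsProbabilityMeasure μpr]
      (n : ℕ) (_hn : 2 ≤ n)
      (S : Finset (Fin n)) (_hS : S.Nonempty)
      (d : Fin n → ℝ) (_hd0 : ∀ v ∈ S, 0 ≤ d v) (_hdn : ∀ v ∈ S, d v ≤ (n : ℝ))
      (ε η : ℝ) (_hε0 : 0 < ε) (_hε1 : ε ≤ 1) (_hη : 0 < η)
      (X : Fin n → Ω → ℝ)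
      (_hXmeas : ∀ v, Measurable (X v))
      (_hXindep : iIndepFun
        (fun v : {v : Fin n // v ∈ S} => X v) μpr)
      (_hXdist : ∀ v ∈ S, Measure.map (X v) μpr = symGeom (Real.exp ε)),
      ∀ v ∈ S,
        (1 + η) * ((1 / (S.card : ℝ)) * ∑ u ∈ S, d u) + c * ((1 + η) / ε) * Real.log n
            < d v →
        (μpr {ω |
          d v + X v ω ≤
            (1 + η) * ((1 / (S.card : ℝ)) * ∑ u ∈ S, (d u + X u ω))}).toReal ≤
          1 / (n : ℝ) ^ 3 := by
  refine ⟨20, by norm_num, ?_⟩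
  intro Ω _ μpr _ n hn S hS d hd0 hdn ε η hε0 hε1 hη X hXmeas hXindep hXdist v hv hgap
  set s : ℝ := (S.card : ℝ) with hsdef
  have hs0 : 0 < s := by
    have := Finset.card_pos.mpr hS
    rw [hsdef]; exact_mod_cast this
  have hn2 : (2:ℝ) ≤ (n:ℝ) := by exact_mod_cast hn
  have hn0 : (0:ℝ) < (n:ℝ) := by linarith
  have hlogn : Real.log 2 ≤ Real.log n := Real.log_le_log (by norm_num) hn2
  have hlog2 : (0.6931471803 : ℝ) < Real.log 2 := Real.log_two_gt_d9
  set t2 : ℝ := 10 * Real.log n / ε with ht2def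
  set t1 : ℝ := (1+η) * t2 with ht1def
  have ht2 : 1 ≤ t2 := by
    rw [ht2def, le_div_iff₀ hε0]
    nlinarith
  have ht1 : 1 ≤ t1 := by nlinarith
  have ht21 : t2 ≤ t1 := by nlinarith
  -- tail bound for each variable
  have key : ∀ u ∈ S, ∀ t : ℝ, 1 ≤ t →
      μpr {ω | t ≤ |X u ω|} ≤ ENNReal.ofReal (2 * Real.exp (ε * (1 - t))) := by
    intro u hu t ht
    have hset : MeasurableSet {x : ℝ | t ≤ |x|} :=
      measurableSet_le measurable_const continuous_abs.measurable
    have hpre : {ω | t ≤ |X u ω|} = X u ⁻¹' {x : ℝ | t ≤ |x|} := rfl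
    rw [hpre, ← Measure.map_apply (hXmeas u) hset, hXdist u hu]
    exact symGeom_tail_exp hε0 ht
  -- event inclusion
  have hsub : {ω | d v + X v ω ≤ (1+η) * ((1/s) * ∑ u ∈ S, (d u + X u ω))}
      ⊆ {ω | t1 ≤ |X v ω|} ∪ ⋃ u ∈ S, {ω | t2 ≤ |X u ω|} := by
    intro ω hω
    by_contra hcon
    simp only [Set.mem_union, Set.mem_iUnion, Set.mem_setOf_eq, not_or, not_exists,
      not_le] at hcon
    obtain ⟨h1, h2⟩ := hcon
    have hXv : -t1 < X v ω := (abs_lt.mp h1).1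
    have hsumX : ∑ u ∈ S, X u ω < s * t2 := by
      have := Finset.sum_lt_sum_of_nonempty hS (f := fun u => X u ω) (g := fun _ => t2)
        (fun u hu => (abs_lt.mp (h2 u hu)).2)
      rw [Finset.sum_const, nsmul_eq_mul] at this
      exact this
    have hEω : d v + X v ω ≤ (1+η) * ((1/s) * (∑ u ∈ S, d u + ∑ u ∈ S, X u ω)) := by
      have := hω
      rw [Set.mem_setOf_eq, Finset.sum_add_distrib] at this
      exact this
    have h3 : (1/s) * ∑ u ∈ S, X u ω < t2 := by
      have hm := mul_lt_mul_of_pos_left hsumX (show (0:ℝ) < 1/s by positivity)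
      have he : (1/s) * (s * t2) = t2 := by field_simp
      linarith [hm, he.le, he.ge]
    have hdecomp : (1/s) * (∑ u ∈ S, d u + ∑ u ∈ S, X u ω)
        < (1/s) * ∑ u ∈ S, d u + t2 := by
      have : (1/s) * (∑ u ∈ S, d u + ∑ u ∈ S, X u ω)
          = (1/s) * ∑ u ∈ S, d u + (1/s) * ∑ u ∈ S, X u ω := by ring
      linarith
    have hmul : (1+η) * ((1/s) * (∑ u ∈ S, d u + ∑ u ∈ S, X u ω))
        < (1+η) * ((1/s) * ∑ u ∈ S, d u + t2) :=
      mul_lt_mul_of_pos_left hdecomp (by linarith)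
    have hexp : (1+η) * ((1/s) * ∑ u ∈ S, d u + t2)
        = (1+η) * ((1/s) * ∑ u ∈ S, d u) + t1 := by
      rw [ht1def]; ring
    have hc20 : (20:ℝ) * ((1+η)/ε) * Real.log n = 2 * t1 := by
      rw [ht1def, ht2def]; ring
    rw [hc20] at hgap
    linarith
  -- measure bound
  have hcard : (S.card : ℝ≥0∞) ≤ (n : ℝ≥0∞) := by
    have h := Finset.card_le_univ S
    have h' : S.card ≤ n := by simpa using h
    exact_mod_cast h'
  have hmb : μpr {ω | d v + X v ω ≤ (1+η) * ((1/s) * ∑ u ∈ S, (d u + X u ω))}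
      ≤ ENNReal.ofReal (2 * Real.exp (ε * (1 - t1))
          + (n:ℝ) * (2 * Real.exp (ε * (1 - t2)))) := by
    calc μpr {ω | d v + X v ω ≤ (1+η) * ((1/s) * ∑ u ∈ S, (d u + X u ω))}
        ≤ μpr ({ω | t1 ≤ |X v ω|} ∪ ⋃ u ∈ S, {ω | t2 ≤ |X u ω|}) := measure_mono hsub
      _ ≤ μpr {ω | t1 ≤ |X v ω|} + μpr (⋃ u ∈ S, {ω | t2 ≤ |X u ω|}) := measure_union_le _ _
      _ ≤ μpr {ω | t1 ≤ |X v ω|} + ∑ u ∈ S, μpr {ω | t2 ≤ |X u ω|} := by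
          exact add_le_add_right (measure_biUnion_finset_le S _) _
      _ ≤ ENNReal.ofReal (2 * Real.exp (ε * (1 - t1)))
          + ∑ u ∈ S, ENNReal.ofReal (2 * Real.exp (ε * (1 - t2))) :=
          add_le_add (key v hv t1 ht1) (Finset.sum_le_sum fun u hu => key u hu t2 ht2)
      _ = ENNReal.ofReal (2 * Real.exp (ε * (1 - t1)))
          + (S.card : ℝ≥0∞) * ENNReal.ofReal (2 * Real.exp (ε * (1 - t2))) := by
          rw [Finset.sum_const, nsmul_eq_mul]
      _ ≤ ENNReal.ofReal (2 * Real.exp (ε * (1 - t1)))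
          + (n : ℝ≥0∞) * ENNReal.ofReal (2 * Real.exp (ε * (1 - t2))) := by
          exact add_le_add_right (mul_le_mul_left hcard _) _
      _ = ENNReal.ofReal (2 * Real.exp (ε * (1 - t1))
          + (n:ℝ) * (2 * Real.exp (ε * (1 - t2)))) := by
          rw [ENNReal.ofReal_add (by positivity) (by positivity),
            ← ENNReal.ofReal_natCast n, ← ENNReal.ofReal_mul (by positivity)]
  -- real arithmetic
  have hE2 : Real.exp (ε * (1 - t2)) ≤ 3 / (n:ℝ)^10 := by
    have heq : ε * (1 - t2) = ε - 10 * Real.log n := by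
      rw [ht2def]; field_simp
    rw [heq, Real.exp_sub]
    have h10 : Real.exp (10 * Real.log n) = (n:ℝ)^10 := by
      rw [show (10:ℝ) * Real.log n = ((10:ℕ):ℝ) * Real.log n by norm_num,
        Real.exp_nat_mul, Real.exp_log hn0]
    rw [h10]
    gcongr
    calc Real.exp ε ≤ Real.exp 1 := Real.exp_le_exp.mpr hε1
      _ ≤ 2.7182818286 := (Real.exp_one_lt_d9).le
      _ ≤ 3 := by norm_num
  have hE1 : Real.exp (ε * (1 - t1)) ≤ Real.exp (ε * (1 - t2)) :=
    Real.exp_le_exp.mpr (by nlinarith)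
  have hR : 2 * Real.exp (ε * (1 - t1)) + (n:ℝ) * (2 * Real.exp (ε * (1 - t2)))
      ≤ 1 / (n : ℝ) ^ 3 := by
    calc 2 * Real.exp (ε * (1 - t1)) + (n:ℝ) * (2 * Real.exp (ε * (1 - t2)))
        ≤ 2 * Real.exp (ε * (1 - t2)) + (n:ℝ) * (2 * Real.exp (ε * (1 - t2))) := by
          have : (2:ℝ) * Real.exp (ε * (1 - t1)) ≤ 2 * Real.exp (ε * (1 - t2)) := by
            linarith
          linarith
      _ = 2 * (1 + (n:ℝ)) * Real.exp (ε * (1 - t2)) := by ring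
      _ ≤ 2 * (1 + (n:ℝ)) * (3 / (n:ℝ)^10) := by
          apply mul_le_mul_of_nonneg_left hE2 (by positivity)
      _ ≤ 2 * (2 * (n:ℝ)) * (3 / (n:ℝ)^10) := by
          apply mul_le_mul_of_nonneg_right ?_ (by positivity)
          linarith
      _ = 12 * (n:ℝ) / (n:ℝ)^10 := by ring
      _ = 12 / (n:ℝ)^9 := by
          field_simp
      _ ≤ 1 / (n:ℝ)^3 := by
          rw [div_le_div_iff₀ (by positivity) (by positivity)]
          nlinarith [pow_le_pow_left₀ (show (0:ℝ) ≤ 2 by norm_num) hn2 6,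
            pow_pos hn0 3]
  have hfinal := le_trans hmb (ENNReal.ofReal_le_ofReal hR)
  exact ENNReal.toReal_le_of_le_ofReal (by positivity) hfinal
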